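/- Let a₁, …, aₙ ≥ 2 be integers. The abelianization of the group Δ̃ = ⟨γ₁, …, γₙ, c | γ₁^{a₁} = ⋯ = γₙ^{aₙ} = c, γ₁⋯γₙ = c^{n−2}⟩ is finite of order d = (∏ⱼ aⱼ)(n − 2 − ∑ⱼ 1/aⱼ), provided this quantity is positive. -/

import Mathlib

/-- Relators of the centrally extended polygon group
`Δ̃ = ⟨γ₁,…,γₙ, c | γ₁^{a₁} = ⋯ = γₙ^{aₙ} = c, γ₁⋯γₙ = c^{n−2}⟩`, with generators indexed
by `Fin n ⊕ Unit` (the `Unit` generator being `c`). -/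
def extPolygonRels (n : ℕ) (a : Fin n → ℕ) : Set (FreeGroup (Fin n ⊕ Unit)) :=
  {x | (∃ j : Fin n, x = FreeGroup.of (Sum.inl j) ^ a j * (FreeGroup.of (Sum.inr ()))⁻¹)
    ∨ x = (List.ofFn fun j : Fin n => FreeGroup.of (Sum.inl j)).prod
        * (FreeGroup.of (Sum.inr ()) ^ (n - 2))⁻¹}

/-- The centrally extended polygon group `Δ̃(a₁,…,aₙ)`. -/
def ExtPolygonGroup (n : ℕ) (a : Fin n → ℕ) := PresentedGroup (extPolygonRels n a)

instance (n : ℕ) (a : Fin n → ℕ) : Group (ExtPolygonGroup n a) := by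
  unfold ExtPolygonGroup; infer_instance

section ExtPolygonProof
open Matrix in

lemma card_quot_range_mulVecLin {ι : Type*} [Fintype ι] [DecidableEq ι] (M : Matrix ι ι ℤ)
    (hM : M.det ≠ 0) :
    Nat.card ((ι → ℤ) ⧸ LinearMap.range M.mulVecLin) = M.det.natAbs := by
  classical
  have hinj : Function.Injective M.mulVecLin := by
    intro x y hxy
    have h0 : M *ᵥ (x - y) = 0 := by
      simpa [Matrix.mulVec_sub, sub_eq_zero] using hxy
    exact sub_eq_zero.mp (Matrix.eq_zero_of_mulVec_eq_zero hM h0)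
  set N := LinearMap.range M.mulVecLin with hNdef
  let e : (ι → ℤ) ≃ₗ[ℤ] N := LinearEquiv.ofInjective M.mulVecLin hinj
  obtain ⟨m, snf⟩ := N.smithNormalForm (Pi.basisFun ℤ ι)
  obtain ⟨bM, bN, f, av, hsnf⟩ := snf
  -- `f` is bijective
  have hfe : Nonempty (Fin m ≃ ι) := ⟨bN.indexEquiv ((Pi.basisFun ℤ ι).map e)⟩
  have hcard : m = Fintype.card ι := by
    simpa using Fintype.card_congr hfe.some
  have hfbij : Function.Bijective f :=
    (Fintype.bijective_iff_injective_and_card f).mpr ⟨f.injective, by simpa using hcard⟩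
  let fe : Fin m ≃ ι := Equiv.ofBijective f hfbij
  -- index computation via Smith normal form
  have hidx : Nat.card ((ι → ℤ) ⧸ N) = ∏ i : Fin m, (av i).natAbs := by
    have h1 := Module.Basis.SmithNormalForm.toAddSubgroup_index_eq_pow_mul_prod
      ⟨bM, bN, f, av, hsnf⟩
    have h2 : N.toAddSubgroup.index = Nat.card ((ι → ℤ) ⧸ N) := rfl
    rw [h2] at h1
    have h3 : Fintype.card ι - m = 0 := by omega
    rw [h1, h3]
    simp [Ideal.span_singleton_toAddSubgroup_eq_zmultiples, Int.index_zmultiples]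
  -- determinant computation
  have hdet : M.det.natAbs = ∏ i : Fin m, (av i).natAbs := by
    let e' : (ι → ℤ) ≃ₗ[ℤ] N := bM.equiv (bN.reindex fe) (Equiv.refl ι)
    have hassoc : Associated (LinearMap.det (N.subtype ∘ₗ (e : (ι → ℤ) →ₗ[ℤ] N)))
        (LinearMap.det (N.subtype ∘ₗ (e' : (ι → ℤ) →ₗ[ℤ] N))) :=
      LinearMap.associated_det_comp_equiv _ _ _
    have hd1 : LinearMap.det (N.subtype ∘ₗ (e : (ι → ℤ) →ₗ[ℤ] N)) = M.det := by
      have h4 : N.subtype ∘ₗ (e : (ι → ℤ) →ₗ[ℤ] N) = M.mulVecLin := by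
        ext x
        rfl
      have h5 : M.mulVecLin = Matrix.toLin' M := rfl
      rw [h4, h5, LinearMap.det_toLin']
    have hg : ∀ i, (N.subtype ∘ₗ (e' : (ι → ℤ) →ₗ[ℤ] N)) (bM i) = av (fe.symm i) • bM i := by
      intro i
      have h6 : e' (bM i) = (bN.reindex fe) i :=
        bM.equiv_apply i (bN.reindex fe) (Equiv.refl ι)
      have h7 : ((bN.reindex fe) i : ι → ℤ) = av (fe.symm i) • bM (f (fe.symm i)) := by
        rw [Module.Basis.reindex_apply, hsnf]
      have h8 : f (fe.symm i) = i := fe.apply_symm_apply i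
      simp only [LinearMap.comp_apply, Submodule.subtype_apply, LinearEquiv.coe_coe]
      rw [h6, h7, h8]
    have hd2 : LinearMap.det (N.subtype ∘ₗ (e' : (ι → ℤ) →ₗ[ℤ] N)) = ∏ i : Fin m, av i := by
      have h9 : LinearMap.toMatrix bM bM (N.subtype ∘ₗ (e' : (ι → ℤ) →ₗ[ℤ] N))
          = Matrix.diagonal (fun i => av (fe.symm i)) := by
        ext i j
        rw [LinearMap.toMatrix_apply, hg, LinearEquiv.map_smul, Module.Basis.repr_self,
          Finsupp.smul_single, smul_eq_mul, mul_one]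
        by_cases h : i = j
        · rw [h, Matrix.diagonal_apply_eq, Finsupp.single_eq_same]
        · rw [Matrix.diagonal_apply_ne _ h, Finsupp.single_eq_of_ne h]
      rw [← LinearMap.det_toMatrix bM, h9, Matrix.det_diagonal]
      exact Equiv.prod_comp fe.symm av
    have h10 := Int.natAbs_eq_iff_associated.mpr hassoc
    rw [hd1, hd2] at h10
    rw [h10]
    exact map_prod Int.natAbsHom av Finset.univ
  rw [hidx, hdet]

def extPolygonMat (n : ℕ) (a : Fin n → ℕ) : Matrix (Fin n ⊕ Unit) (Fin n ⊕ Unit) ℤ :=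
  Matrix.fromBlocks (Matrix.diagonal fun j => (a j : ℤ)) (Matrix.of fun _ _ => 1)
    (Matrix.of fun _ _ => -1) (Matrix.of fun _ _ => -((n - 2 : ℕ) : ℤ))

namespace ExtPolygonAux

variable (n : ℕ) (a : Fin n → ℕ)

/-- The column lattice. -/
def L : Submodule ℤ ((Fin n ⊕ Unit) → ℤ) := LinearMap.range (extPolygonMat n a).mulVecLin

lemma col_mem (k : Fin n ⊕ Unit) : (extPolygonMat n a).transpose k ∈ L n a :=
  ⟨Pi.single k 1, by rw [Matrix.mulVecLin_apply, Matrix.mulVec_single_one]; rfl⟩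

lemma col_inl (j : Fin n) :
    (extPolygonMat n a).transpose (Sum.inl j) =
      (a j : ℤ) • Pi.single (Sum.inl j) 1 - Pi.single (Sum.inr ()) 1 := by
  ext (i | i)
  · by_cases h : i = j <;>
      simp [extPolygonMat, Matrix.transpose_apply, Matrix.fromBlocks, Matrix.diagonal_apply,
        h, Pi.single_apply]
  · simp [extPolygonMat, Matrix.transpose_apply, Matrix.fromBlocks, Pi.single_apply]

lemma col_inr :
    (extPolygonMat n a).transpose (Sum.inr ()) =
      (∑ j, Pi.single (Sum.inl j) 1) - ((n - 2 : ℕ) : ℤ) • Pi.single (Sum.inr ()) 1 := by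
  ext (i | i)
  · simp [extPolygonMat, Matrix.transpose_apply, Matrix.fromBlocks, Pi.single_apply,
      Finset.sum_ite_eq]
  · simp [extPolygonMat, Matrix.transpose_apply, Matrix.fromBlocks, Pi.single_apply]

/-- The lift to the quotient. -/
noncomputable def φ : FreeGroup (Fin n ⊕ Unit) →* Multiplicative (((Fin n ⊕ Unit) → ℤ) ⧸ L n a) :=
  FreeGroup.lift fun s => Multiplicative.ofAdd (Submodule.Quotient.mk (Pi.single s 1))

lemma φ_rels : ∀ r ∈ extPolygonRels n a, φ n a r = 1 := by
  rintro r (⟨j, rfl⟩ | rfl) <;> simp only [φ]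
  · rw [map_mul, map_pow, map_inv, FreeGroup.lift_apply_of, FreeGroup.lift_apply_of,
      ← ofAdd_nsmul, ← ofAdd_neg, ← ofAdd_add, ofAdd_eq_one, ← natCast_zsmul,
      ← Submodule.Quotient.mk_smul, ← Submodule.Quotient.mk_neg, ← Submodule.Quotient.mk_add,
      Submodule.Quotient.mk_eq_zero]
    have : (a j : ℤ) • Pi.single (Sum.inl j) (1:ℤ) + -Pi.single (Sum.inr ()) 1
        = (extPolygonMat n a).transpose (Sum.inl j) := by
      rw [col_inl]; abel
    rw [this]
    exact col_mem n a _
  · rw [map_mul, map_inv, map_pow, FreeGroup.lift_apply_of, map_list_prod, List.map_ofFn,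
      List.prod_ofFn]
    simp only [Function.comp_def, FreeGroup.lift_apply_of]
    rw [← ofAdd_nsmul, ← ofAdd_sum, ← ofAdd_neg, ← ofAdd_add, ofAdd_eq_one, ← natCast_zsmul,
      ← Submodule.Quotient.mk_smul]
    have hsum : (∑ j, Submodule.Quotient.mk (p := L n a) (Pi.single (Sum.inl j) (1:ℤ)))
        = Submodule.Quotient.mk (p := L n a) (∑ j, Pi.single (Sum.inl j) (1:ℤ)) := by
      rw [← Submodule.mkQ_apply, map_sum]
      rfl
    rw [hsum, ← Submodule.Quotient.mk_neg, ← Submodule.Quotient.mk_add,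
      Submodule.Quotient.mk_eq_zero]
    have : (∑ j, Pi.single (Sum.inl j) (1:ℤ)) + -(((n - 2 : ℕ) : ℤ) • Pi.single (Sum.inr ()) 1)
        = (extPolygonMat n a).transpose (Sum.inr ()) := by
      rw [col_inr]; abel
    rw [this]
    exact col_mem n a _
  
noncomputable def Φ : Abelianization (ExtPolygonGroup n a)
    →* Multiplicative (((Fin n ⊕ Unit) → ℤ) ⧸ L n a) :=
  Abelianization.lift
    (G := ExtPolygonGroup n a) (PresentedGroup.toGroup (φ_rels n a))

noncomputable def genAb (s : Fin n ⊕ Unit) : Abelianization (ExtPolygonGroup n a) :=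
  Abelianization.of (G := ExtPolygonGroup n a) (PresentedGroup.of s)

lemma Φ_gen (s : Fin n ⊕ Unit) :
    Φ n a (genAb n a s)
      = Multiplicative.ofAdd (Submodule.Quotient.mk (Pi.single s 1)) := by
  unfold Φ genAb
  exact (Abelianization.lift_apply_of _ _).trans (PresentedGroup.toGroup.of (φ_rels n a))

lemma mk_rel {r : FreeGroup (Fin n ⊕ Unit)} (hr : r ∈ extPolygonRels n a) :
    (QuotientGroup.mk r : ExtPolygonGroup n a) = 1 :=
  (QuotientGroup.eq_one_iff r).mpr (Subgroup.subset_normalClosure hr)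

lemma relAb1 (j : Fin n) :
    genAb n a (Sum.inl j) ^ (a j) = genAb n a (Sum.inr ()) := by
  have h := mk_rel n a (r := FreeGroup.of (Sum.inl j) ^ a j * (FreeGroup.of (Sum.inr ()))⁻¹)
    (Or.inl ⟨j, rfl⟩)
  have h2 : ((PresentedGroup.of (Sum.inl j) : ExtPolygonGroup n a) ^ a j)
      * (PresentedGroup.of (Sum.inr ()) : ExtPolygonGroup n a)⁻¹ = 1 := h
  have h3 : (PresentedGroup.of (Sum.inl j) : ExtPolygonGroup n a) ^ a j
      = PresentedGroup.of (Sum.inr ()) := mul_inv_eq_one.mp h2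
  unfold genAb
  exact (map_pow (Abelianization.of (G := ExtPolygonGroup n a)) _ _).symm.trans (congrArg _ h3)

lemma relAb2 :
    (∏ j, genAb n a (Sum.inl j)) = genAb n a (Sum.inr ()) ^ (n - 2) := by
  have h := mk_rel n a (r := (List.ofFn fun j : Fin n => FreeGroup.of (Sum.inl j)).prod
    * (FreeGroup.of (Sum.inr ()) ^ (n - 2))⁻¹) (Or.inr rfl)
  have h2 : ((QuotientGroup.mk ((List.ofFn fun j : Fin n => FreeGroup.of (Sum.inl j)).prod) :
        ExtPolygonGroup n a))
      * (((QuotientGroup.mk (FreeGroup.of (Sum.inr ()) ^ (n - 2))) : ExtPolygonGroup n a))⁻¹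
        = 1 := h
  have h3 : (QuotientGroup.mk ((List.ofFn fun j : Fin n => FreeGroup.of (Sum.inl j)).prod) :
        ExtPolygonGroup n a)
      = (QuotientGroup.mk (FreeGroup.of (Sum.inr ()) ^ (n - 2)) : ExtPolygonGroup n a) :=
    mul_inv_eq_one.mp h2
  have h4 := congrArg (Abelianization.of (G := ExtPolygonGroup n a)) h3
  have h6 : (QuotientGroup.mk (FreeGroup.of (Sum.inr ()) ^ (n - 2)) : ExtPolygonGroup n a)
      = (PresentedGroup.of (Sum.inr ()) : ExtPolygonGroup n a) ^ (n - 2) := by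
    exact map_pow (QuotientGroup.mk' (Subgroup.normalClosure (extPolygonRels n a))) _ _
  rw [h6] at h4
  replace h4 := h4.trans (map_pow (Abelianization.of (G := ExtPolygonGroup n a)) _ _)
  show _ = genAb n a (Sum.inr ()) ^ (n - 2)
  unfold genAb
  rw [← h4]
  have h5 : (Abelianization.of (G := ExtPolygonGroup n a)).comp
      (QuotientGroup.mk' (Subgroup.normalClosure (extPolygonRels n a)))
      ((List.ofFn fun j : Fin n => FreeGroup.of (Sum.inl j)).prod)
      = ∏ j, genAb n a (Sum.inl j) := by
    rw [map_list_prod, List.map_ofFn, List.prod_ofFn]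
    rfl
  exact h5.symm

noncomputable def χ₀ : ((Fin n ⊕ Unit) → ℤ) →+ Additive (Abelianization (ExtPolygonGroup n a)) :=
  AddMonoidHom.mk' (fun v => ∑ s, v s • Additive.ofMul (genAb n a s))
    (by
      intro v w
      simp only [Pi.add_apply, add_smul]
      rw [Finset.sum_add_distrib])

lemma χ₀_single (s : Fin n ⊕ Unit) (m : ℤ) :
    χ₀ n a (Pi.single s m) = m • Additive.ofMul (genAb n a s) := by
  show (∑ t, (Pi.single s m : (Fin n ⊕ Unit) → ℤ) t • Additive.ofMul (genAb n a t)) = _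
  rw [Finset.sum_eq_single s]
  · rw [Pi.single_eq_same]
  · intro t _ hts
    rw [Pi.single_eq_of_ne hts, zero_smul]
  · intro h
    exact absurd (Finset.mem_univ s) h

lemma χ₀_ker : L n a ≤ LinearMap.ker (AddMonoidHom.toIntLinearMap (χ₀ n a)) := by
  unfold L
  rw [Matrix.range_mulVecLin, Submodule.span_le]
  rintro x ⟨k, rfl⟩
  show χ₀ n a ((extPolygonMat n a).transpose k) = 0
  rcases k with j | k
  · rw [col_inl, map_sub, map_zsmul, χ₀_single, χ₀_single, smul_smul, mul_one, one_smul]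
    rw [sub_eq_zero, ← relAb1 n a j, natCast_zsmul]
    exact (ofMul_pow _ _).symm
  · rw [col_inr, map_sub, map_sum, map_zsmul, χ₀_single, smul_smul, mul_one]
    simp only [χ₀_single, one_smul]
    rw [sub_eq_zero, natCast_zsmul, ← ofMul_pow, ← relAb2 n a]
    exact (ofMul_prod _ _).symm

noncomputable def χ : (((Fin n ⊕ Unit) → ℤ) ⧸ L n a)
    →ₗ[ℤ] Additive (Abelianization (ExtPolygonGroup n a)) :=
  Submodule.liftQ (L n a) (AddMonoidHom.toIntLinearMap (χ₀ n a)) (χ₀_ker n a)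

noncomputable def Ψ : Multiplicative (((Fin n ⊕ Unit) → ℤ) ⧸ L n a)
    →* Abelianization (ExtPolygonGroup n a) :=
  MonoidHom.mk' (fun q => Additive.toMul (χ n a (Multiplicative.toAdd q)))
    (by
      intro x y
      show Additive.toMul (χ n a (Multiplicative.toAdd x + Multiplicative.toAdd y)) = _
      rw [map_add]
      rfl)

lemma left_inv : ∀ x : Abelianization (ExtPolygonGroup n a), Ψ n a (Φ n a x) = x := by
  have h : (Ψ n a).comp (Φ n a) = MonoidHom.id _ := by
    apply Abelianization.hom_ext
    apply PresentedGroup.ext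
    intro s
    show Ψ n a (Φ n a (genAb n a s)) = genAb n a s
    rw [Φ_gen]
    show Additive.toMul (χ n a (Submodule.Quotient.mk (Pi.single s 1))) = genAb n a s
    rw [χ, Submodule.liftQ_apply]
    show Additive.toMul (χ₀ n a (Pi.single s 1)) = genAb n a s
    rw [χ₀_single, one_smul]
    rfl
  intro x
  exact DFunLike.congr_fun h x

lemma right_inv : ∀ q : Multiplicative (((Fin n ⊕ Unit) → ℤ) ⧸ L n a),
    Φ n a (Ψ n a q) = q := by
  intro q
  obtain ⟨v, hv⟩ := Submodule.Quotient.mk_surjective (L n a) (Multiplicative.toAdd q)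
  have hq : q = Multiplicative.ofAdd (Submodule.Quotient.mk v) := by
    rw [hv, ofAdd_toAdd]
  subst hq
  show Φ n a (Additive.toMul (χ n a (Submodule.Quotient.mk v))) = _
  rw [χ, Submodule.liftQ_apply]
  show Φ n a (Additive.toMul (χ₀ n a v)) = _
  show Φ n a (Additive.toMul (∑ s, v s • Additive.ofMul (genAb n a s))) = _
  rw [toMul_sum]
  rw [map_prod]
  have hterm : ∀ s, Φ n a (Additive.toMul (v s • Additive.ofMul (genAb n a s)))
      = Multiplicative.ofAdd (v s • Submodule.Quotient.mk (p := L n a) (Pi.single s 1)) := by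
    intro s
    rw [toMul_zsmul, toMul_ofMul, map_zpow, Φ_gen]
    exact (ofAdd_zsmul _ _).symm
  simp only [hterm]
  rw [← ofAdd_sum]
  congr 1
  have : ∀ s, v s • Submodule.Quotient.mk (p := L n a) (Pi.single s (1:ℤ))
      = Submodule.Quotient.mk (p := L n a) (Pi.single s (v s)) := by
    intro s
    rw [← Submodule.Quotient.mk_smul]
    congr 1
    ext t
    by_cases h : t = s
    · subst h; simp
    · simp [h]
  simp only [this]
  have h7 : (∑ s, Submodule.Quotient.mk (p := L n a) (Pi.single s (v s)))
      = Submodule.Quotient.mk (p := L n a) v := by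
    rw [show (Submodule.Quotient.mk (p := L n a) : _ → _) = ⇑((L n a).mkQ) from rfl,
      ← map_sum, Finset.univ_sum_single]
  rw [h7]

lemma card_ab_eq :
    Nat.card (Abelianization (ExtPolygonGroup n a))
      = Nat.card (((Fin n ⊕ Unit) → ℤ) ⧸ L n a) := by
  refine Nat.card_congr ⟨fun x => Multiplicative.toAdd (Φ n a x),
    fun q => Ψ n a (Multiplicative.ofAdd q), ?_, ?_⟩
  · intro x
    exact left_inv n a x
  · intro q
    exact right_inv n a (Multiplicative.ofAdd q)

end ExtPolygonAux

lemma extPolygonMat_det (n : ℕ) (a : Fin n → ℕ) (ha : ∀ j, 2 ≤ a j) (hn : 3 ≤ n) :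
    ((extPolygonMat n a).det : ℚ)
      = -((∏ j, (a j : ℚ)) * ((n : ℚ) - 2 - ∑ j, (a j : ℚ)⁻¹)) := by
  have ha0 : ∀ j, (a j : ℚ) ≠ 0 := fun j => by
    have := ha j; positivity
  have hmap : (RingHom.mapMatrix (Int.castRingHom ℚ)) (extPolygonMat n a)
      = Matrix.fromBlocks (Matrix.diagonal fun j => (a j : ℚ)) (Matrix.of fun _ _ => 1)
        (Matrix.of fun _ _ => -1) (Matrix.of fun _ _ => -((n - 2 : ℕ) : ℚ)) := by
    ext i j
    rcases i with i | i <;> rcases j with j | j <;>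
      (try by_cases h : i = j) <;>
      simp [extPolygonMat, Matrix.fromBlocks, Matrix.diagonal_apply, *]
  have hcast : ((extPolygonMat n a).det : ℚ)
      = ((RingHom.mapMatrix (Int.castRingHom ℚ)) (extPolygonMat n a)).det := by
    rw [← RingHom.map_det]; rfl
  rw [hcast, hmap]
  set A : Matrix (Fin n) (Fin n) ℚ := Matrix.diagonal fun j => (a j : ℚ) with hA
  letI : Invertible A := ⟨Matrix.diagonal fun j => (a j : ℚ)⁻¹,
    by rw [hA, Matrix.diagonal_mul_diagonal]; ext i j;
       by_cases h : i = j <;> simp [h, inv_mul_cancel₀ (ha0 _), Matrix.one_apply],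
    by rw [hA, Matrix.diagonal_mul_diagonal]; ext i j;
       by_cases h : i = j <;> simp [h, mul_inv_cancel₀ (ha0 _), Matrix.one_apply]⟩
  rw [Matrix.det_fromBlocks₁₁]
  have hdetA : A.det = ∏ j, (a j : ℚ) := by rw [hA, Matrix.det_diagonal]
  have hinv : (⅟A : Matrix (Fin n) (Fin n) ℚ) = Matrix.diagonal fun j => (a j : ℚ)⁻¹ := rfl
  have h2 : ((n - 2 : ℕ) : ℚ) = (n : ℚ) - 2 := by
    have : (2 : ℕ) ≤ n := by omega
    push_cast [this]; ring
  rw [hdetA, Matrix.det_unique]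
  simp only [hinv, Matrix.sub_apply, Matrix.mul_apply, Matrix.of_apply,
    Matrix.diagonal_apply, Finset.sum_ite_eq, Finset.mem_univ, if_true, h2]
  have h3 : ∀ x : Fin n, (∑ y : Fin n, -1 * if y = x then ((a y : ℚ))⁻¹ else 0) * 1
      = -((a x : ℚ))⁻¹ := by
    intro x
    simp [Finset.sum_ite_eq' Finset.univ x fun y => -((a y:ℚ))⁻¹]
  simp only [h3]
  simp only [Finset.sum_neg_distrib]
  ring

end ExtPolygonProof

/-- Let `a₁,…,aₙ ≥ 2` be integers. The abelianization of
`Δ̃ = ⟨γ₁,…,γₙ, c | γ₁^{a₁} = ⋯ = γₙ^{aₙ} = c, γ₁⋯γₙ = c^{n−2}⟩` is finite of order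
`d = (∏ⱼ aⱼ)(n − 2 − ∑ⱼ 1/aⱼ)`, provided this quantity is positive. -/
theorem extPolygonGroup_abelianization_card (n : ℕ) (a : Fin n → ℕ) (ha : ∀ j, 2 ≤ a j)
    (hd : 0 < (∏ j, (a j : ℚ)) * ((n : ℚ) - 2 - ∑ j, (a j : ℚ)⁻¹)) :
    (Nat.card (Abelianization (ExtPolygonGroup n a)) : ℚ)
      = (∏ j, (a j : ℚ)) * ((n : ℚ) - 2 - ∑ j, (a j : ℚ)⁻¹) := by
  classical
  have hprod : 0 < ∏ j, (a j : ℚ) :=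
    Finset.prod_pos fun j _ => by have := ha j; positivity
  have hsum : 0 ≤ ∑ j, (a j : ℚ)⁻¹ :=
    Finset.sum_nonneg fun j _ => by positivity
  have hXpos : 0 < (n : ℚ) - 2 - ∑ j, (a j : ℚ)⁻¹ := by
    by_contra h
    push_neg at h
    nlinarith
  have hn : 3 ≤ n := by
    have h2 : (2 : ℚ) < (n : ℚ) := by linarith
    have : (2 : ℕ) < n := by exact_mod_cast h2
    omega
  have hdet := extPolygonMat_det n a ha hn
  have hdetne : (extPolygonMat n a).det ≠ 0 := by
    intro h0
    rw [h0] at hdet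
    simp only [Int.cast_zero] at hdet
    nlinarith
  have hquot : Nat.card ((Fin n ⊕ Unit → ℤ) ⧸ ExtPolygonAux.L n a)
      = (extPolygonMat n a).det.natAbs :=
    card_quot_range_mulVecLin (extPolygonMat n a) hdetne
  rw [ExtPolygonAux.card_ab_eq n a, hquot]
  have hcast : (((extPolygonMat n a).det.natAbs : ℕ) : ℚ) = |((extPolygonMat n a).det : ℚ)| := by
    rw [Nat.cast_natAbs, Int.cast_abs]
  rw [hcast, hdet, abs_neg, abs_of_pos (by nlinarith)]
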